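/- For multi-indices α, β, μ, ν ∈ ℤ_{≥0}^n, the Kostant pairing of the Weyl algebra monomials satisfies κ(x^α y^β, x^μ y^ν) = (-1)^{|α|} δ_{α,ν} δ_{β,μ} α! β!. In particular, the monomial basis {x^α y^β} is an orthogonal basis of the Weyl algebra with respect to κ. -/

import Mathlib

open scoped BigOperators

/-- Generators of the Weyl algebra: `Sum.inl i` is `xᵢ`, `Sum.inr i` is `yᵢ`. -/
abbrev WGen (n : ℕ) := Fin n ⊕ Fin n

/-- The symplectic form `ω` with `ω(yᵢ, xⱼ) = δᵢⱼ = -ω(xⱼ, yᵢ)` and `ω` vanishing on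
pairs of `x`'s and pairs of `y`'s. -/
def omegaForm {n : ℕ} : WGen n → WGen n → ℂ
  | Sum.inl i, Sum.inr j => if i = j then -1 else 0
  | Sum.inr i, Sum.inl j => if i = j then 1 else 0
  | Sum.inl _, Sum.inl _ => 0
  | Sum.inr _, Sum.inr _ => 0

/-- The list of generators of the monomial `x^α y^β` (all the `x`'s, then all the `y`'s). -/
def monoList {n : ℕ} (α β : Fin n → ℕ) : List (WGen n) :=
  ((List.finRange n).flatMap fun i => List.replicate (α i) (Sum.inl i)) ++
    ((List.finRange n).flatMap fun i => List.replicate (β i) (Sum.inr i))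

/-- The Kostant pairing `κ` on (normally ordered) monomials of the Weyl algebra, computed
via the quantization isomorphism with the symmetric algebra:
`κ(u₁⋯u_p, v₁⋯v_p) = Σ_{π ∈ S_p} ω(u₁, v_{π(1)}) ⋯ ω(u_p, v_{π(p)})`, and `κ = 0` on
monomials of different degrees. -/
noncomputable def kostant {n : ℕ} (u v : List (WGen n)) : ℂ :=
  if h : u.length = v.length then
    ∑ π : Equiv.Perm (Fin u.length), ∏ i, omegaForm (u.get i) (v.get (Fin.cast h (π i)))
  else 0

namespace KAux
variable {n : ℕ}

lemma beq_ll (x y : Fin n) : ((Sum.inl x : WGen n) == Sum.inl y) = (x == y) := rfl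
lemma beq_lr (x y : Fin n) : ((Sum.inl x : WGen n) == Sum.inr y) = false := rfl
lemma beq_rl (x y : Fin n) : ((Sum.inr x : WGen n) == Sum.inl y) = false := rfl
lemma beq_rr (x y : Fin n) : ((Sum.inr x : WGen n) == Sum.inr y) = (x == y) := rfl

instance : LawfulBEq (WGen n) where
  eq_of_beq {a b} h := by
    cases a <;> cases b <;> simp_all [beq_ll, beq_lr, beq_rl, beq_rr]
  rfl {a} := by
    cases a <;> simp [beq_ll, beq_rr]

lemma omega_inl (i : Fin n) (w : WGen n) :
    omegaForm (Sum.inl i) w = if w = Sum.inr i then -1 else 0 := by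
  cases w with
  | inl j => simp [omegaForm]
  | inr j => simp only [omegaForm, Sum.inr.injEq]
             by_cases h : i = j <;> simp [h, eq_comm]

lemma omega_inr (i : Fin n) (w : WGen n) :
    omegaForm (Sum.inr i) w = if w = Sum.inl i then 1 else 0 := by
  cases w with
  | inr j => simp [omegaForm]
  | inl j => simp only [omegaForm, Sum.inl.injEq]
             by_cases h : i = j <;> simp [h, eq_comm]

noncomputable def psum {m : ℕ} (f g : Fin m → WGen n) : ℂ :=
  ∑ π : Equiv.Perm (Fin m), ∏ i, omegaForm (f i) (g (π i))

def cnt {K : Type*} [Fintype K] (f : K → WGen n) (a : WGen n) : ℕ :=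
  ∑ k, if f k = a then 1 else 0

lemma cnt_comp_equiv {K L : Type*} [Fintype K] [Fintype L] (e : K ≃ L)
    (f : L → WGen n) (a : WGen n) : cnt (f ∘ e) a = cnt f a :=
  e.sum_comp fun k => if f k = a then 1 else 0

lemma cnt_succ {m : ℕ} (f : Fin (m + 1) → WGen n) (a : WGen n) :
    cnt f a = (if f 0 = a then 1 else 0) + cnt (f ∘ Fin.succ) a :=
  Fin.sum_univ_succ _

lemma psum_succ {m : ℕ} (f g : Fin (m + 1) → WGen n) :
    psum f g = ∑ j : Fin (m + 1), omegaForm (f 0) (g j) *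
      psum (f ∘ Fin.succ) (g ∘ Equiv.swap 0 j ∘ Fin.succ) := by
  rw [psum, ← Equiv.sum_comp Equiv.Perm.decomposeFin.symm, Fintype.sum_prod_type]
  refine Finset.sum_congr rfl fun j _ => ?_
  rw [psum, Finset.mul_sum]
  refine Finset.sum_congr rfl fun σ _ => ?_
  rw [Fin.prod_univ_succ]
  simp [Function.comp]

lemma sum_ite_eq_cnt {m : ℕ} (g : Fin m → WGen n) (a : WGen n) (K : ℂ) :
    ∑ j, (if g j = a then K else 0) = (cnt g a : ℂ) * K := by
  rw [cnt, Nat.cast_sum, Finset.sum_mul]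
  exact Finset.sum_congr rfl fun j _ => by split <;> simp

lemma prod_factorial_succ (F F' : Fin n → ℕ) (i0 : Fin n) (h0 : F i0 = F' i0 + 1)
    (h : ∀ i ≠ i0, F i = F' i) :
    (∏ i, ((F i).factorial : ℂ)) = (F i0 : ℂ) * ∏ i, ((F' i).factorial : ℂ) := by
  rw [← Finset.mul_prod_erase Finset.univ (fun i => ((F i).factorial : ℂ)) (Finset.mem_univ i0),
    ← Finset.mul_prod_erase Finset.univ (fun i => ((F' i).factorial : ℂ)) (Finset.mem_univ i0),
    Finset.prod_congr rfl (fun i hi => by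
      rw [h i (Finset.ne_of_mem_erase hi)])]
  rw [h0, Nat.factorial_succ]
  push_cast
  ring

lemma psum_eq : ∀ {m : ℕ} (f g : Fin m → WGen n),
    psum f g =
      if ∀ i : Fin n, cnt f (Sum.inl i) = cnt g (Sum.inr i) ∧
          cnt f (Sum.inr i) = cnt g (Sum.inl i) then
        (-1 : ℂ) ^ (∑ i, cnt f (Sum.inl i)) * (∏ i, ((cnt f (Sum.inl i)).factorial : ℂ)) *
          ∏ i, ((cnt f (Sum.inr i)).factorial : ℂ)
      else 0 := by
  intro m
  induction m with
  | zero =>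
    intro f g
    simp [psum, cnt]
  | succ m ih =>
    intro f g
    rw [psum_succ]
    rcases hf0 : f 0 with i0 | i0
    · -- f 0 = x_{i0}
      have hBfl : ∀ i, cnt f (Sum.inl i) =
          (if i0 = i then 1 else 0) + cnt (f ∘ Fin.succ) (Sum.inl i) := by
        intro i; rw [cnt_succ f, hf0]; simp
      have hBfr : ∀ i, cnt f (Sum.inr i) = cnt (f ∘ Fin.succ) (Sum.inr i) := by
        intro i; rw [cnt_succ f, hf0]; simp
      have hBg : ∀ (j : Fin (m + 1)) (a : WGen n), cnt g a =
          (if g j = a then 1 else 0) + cnt (g ∘ Equiv.swap 0 j ∘ Fin.succ) a := by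
        intro j a
        have h2 := cnt_succ (g ∘ (Equiv.swap 0 j : Equiv.Perm (Fin (m + 1)))) a
        rw [cnt_comp_equiv (Equiv.swap 0 j : Equiv.Perm (Fin (m + 1))) g a] at h2
        simpa [Function.comp, Function.comp_assoc] using h2
      have hterm : ∀ j : Fin (m + 1),
          omegaForm (Sum.inl i0) (g j) * psum (f ∘ Fin.succ) (g ∘ Equiv.swap 0 j ∘ Fin.succ) =
          if g j = Sum.inr i0 then
            (-1) * psum (f ∘ Fin.succ) (g ∘ Equiv.swap 0 j ∘ Fin.succ) else 0 := by
        intro j; rw [omega_inl]; split <;> simp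
      rw [Finset.sum_congr rfl fun j _ => hterm j]
      have hCC : ∀ j : Fin (m + 1), g j = Sum.inr i0 →
          ((∀ i : Fin n, cnt (f ∘ Fin.succ) (Sum.inl i) =
              cnt (g ∘ Equiv.swap 0 j ∘ Fin.succ) (Sum.inr i) ∧
              cnt (f ∘ Fin.succ) (Sum.inr i) =
              cnt (g ∘ Equiv.swap 0 j ∘ Fin.succ) (Sum.inl i)) ↔
            (∀ i : Fin n, cnt f (Sum.inl i) = cnt g (Sum.inr i) ∧
              cnt f (Sum.inr i) = cnt g (Sum.inl i))) := by
        intro j hj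
        have key : ∀ i : Fin n,
            (cnt (f ∘ Fin.succ) (Sum.inl i) = cnt (g ∘ Equiv.swap 0 j ∘ Fin.succ) (Sum.inr i) ∧
              cnt (f ∘ Fin.succ) (Sum.inr i) = cnt (g ∘ Equiv.swap 0 j ∘ Fin.succ) (Sum.inl i)) ↔
            (cnt f (Sum.inl i) = cnt g (Sum.inr i) ∧
              cnt f (Sum.inr i) = cnt g (Sum.inl i)) := by
          intro i
          rw [hBfl i, hBfr i, hBg j (Sum.inr i), hBg j (Sum.inl i), hj]
          by_cases h : i0 = i <;> simp [h]
        exact forall_congr' key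
      by_cases hC : ∀ i : Fin n, cnt f (Sum.inl i) = cnt g (Sum.inr i) ∧
          cnt f (Sum.inr i) = cnt g (Sum.inl i)
      · rw [if_pos hC]
        have hval : ∀ j : Fin (m + 1), g j = Sum.inr i0 →
            psum (f ∘ Fin.succ) (g ∘ Equiv.swap 0 j ∘ Fin.succ) =
            (-1 : ℂ) ^ (∑ i, cnt (f ∘ Fin.succ) (Sum.inl i)) *
              (∏ i, ((cnt (f ∘ Fin.succ) (Sum.inl i)).factorial : ℂ)) *
              ∏ i, ((cnt (f ∘ Fin.succ) (Sum.inr i)).factorial : ℂ) := by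
          intro j hj
          rw [ih, if_pos ((hCC j hj).2 hC)]
        have hsum : ∀ j : Fin (m + 1),
            (if g j = Sum.inr i0 then
              (-1) * psum (f ∘ Fin.succ) (g ∘ Equiv.swap 0 j ∘ Fin.succ) else 0) =
            if g j = Sum.inr i0 then
              (-1) * ((-1 : ℂ) ^ (∑ i, cnt (f ∘ Fin.succ) (Sum.inl i)) *
                (∏ i, ((cnt (f ∘ Fin.succ) (Sum.inl i)).factorial : ℂ)) *
                ∏ i, ((cnt (f ∘ Fin.succ) (Sum.inr i)).factorial : ℂ)) else 0 := by
          intro j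
          split
          · rename_i hj; rw [hval j hj]
          · rfl
        rw [Finset.sum_congr rfl fun j _ => hsum j, sum_ite_eq_cnt]
        -- algebra
        have hS : (∑ i, cnt f (Sum.inl i)) = (∑ i, cnt (f ∘ Fin.succ) (Sum.inl i)) + 1 := by
          rw [Finset.sum_congr rfl fun i _ => hBfl i, Finset.sum_add_distrib,
            Finset.sum_ite_eq Finset.univ i0 (fun _ => 1)]
          simp [Nat.add_comm]
        have hP1 : (∏ i, ((cnt f (Sum.inl i)).factorial : ℂ)) =
            (cnt f (Sum.inl i0) : ℂ) * ∏ i, ((cnt (f ∘ Fin.succ) (Sum.inl i)).factorial : ℂ) := by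
          refine prod_factorial_succ _ _ i0 ?_ ?_
          · rw [hBfl i0]; simp [Nat.add_comm]
          · intro i hi; rw [hBfl i, if_neg (fun h => hi h.symm), Nat.zero_add]
        have hP2 : (∏ i, ((cnt f (Sum.inr i)).factorial : ℂ)) =
            ∏ i, ((cnt (f ∘ Fin.succ) (Sum.inr i)).factorial : ℂ) :=
          Finset.prod_congr rfl fun i _ => by rw [hBfr i]
        have hcg : (cnt g (Sum.inr i0) : ℂ) = (cnt f (Sum.inl i0) : ℂ) := by
          rw [(hC i0).1]
        rw [hcg, hS, hP1, hP2, pow_succ]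
        ring
      · rw [if_neg hC]
        refine Finset.sum_eq_zero fun j _ => ?_
        split
        · rename_i hj
          rw [ih, if_neg (fun h => hC ((hCC j hj).1 h))]
          simp
        · rfl
    · -- f 0 = y_{i0}
      have hBfr : ∀ i, cnt f (Sum.inr i) =
          (if i0 = i then 1 else 0) + cnt (f ∘ Fin.succ) (Sum.inr i) := by
        intro i; rw [cnt_succ f, hf0]; simp
      have hBfl : ∀ i, cnt f (Sum.inl i) = cnt (f ∘ Fin.succ) (Sum.inl i) := by
        intro i; rw [cnt_succ f, hf0]; simp
      have hBg : ∀ (j : Fin (m + 1)) (a : WGen n), cnt g a =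
          (if g j = a then 1 else 0) + cnt (g ∘ Equiv.swap 0 j ∘ Fin.succ) a := by
        intro j a
        have h2 := cnt_succ (g ∘ (Equiv.swap 0 j : Equiv.Perm (Fin (m + 1)))) a
        rw [cnt_comp_equiv (Equiv.swap 0 j : Equiv.Perm (Fin (m + 1))) g a] at h2
        simpa [Function.comp, Function.comp_assoc] using h2
      have hterm : ∀ j : Fin (m + 1),
          omegaForm (Sum.inr i0) (g j) * psum (f ∘ Fin.succ) (g ∘ Equiv.swap 0 j ∘ Fin.succ) =
          if g j = Sum.inl i0 then
            psum (f ∘ Fin.succ) (g ∘ Equiv.swap 0 j ∘ Fin.succ) else 0 := by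
        intro j; rw [omega_inr]; split <;> simp
      rw [Finset.sum_congr rfl fun j _ => hterm j]
      have hCC : ∀ j : Fin (m + 1), g j = Sum.inl i0 →
          ((∀ i : Fin n, cnt (f ∘ Fin.succ) (Sum.inl i) =
              cnt (g ∘ Equiv.swap 0 j ∘ Fin.succ) (Sum.inr i) ∧
              cnt (f ∘ Fin.succ) (Sum.inr i) =
              cnt (g ∘ Equiv.swap 0 j ∘ Fin.succ) (Sum.inl i)) ↔
            (∀ i : Fin n, cnt f (Sum.inl i) = cnt g (Sum.inr i) ∧
              cnt f (Sum.inr i) = cnt g (Sum.inl i))) := by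
        intro j hj
        have key : ∀ i : Fin n,
            (cnt (f ∘ Fin.succ) (Sum.inl i) = cnt (g ∘ Equiv.swap 0 j ∘ Fin.succ) (Sum.inr i) ∧
              cnt (f ∘ Fin.succ) (Sum.inr i) = cnt (g ∘ Equiv.swap 0 j ∘ Fin.succ) (Sum.inl i)) ↔
            (cnt f (Sum.inl i) = cnt g (Sum.inr i) ∧
              cnt f (Sum.inr i) = cnt g (Sum.inl i)) := by
          intro i
          rw [hBfl i, hBfr i, hBg j (Sum.inr i), hBg j (Sum.inl i), hj]
          by_cases h : i0 = i <;> simp [h]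
        exact forall_congr' key
      by_cases hC : ∀ i : Fin n, cnt f (Sum.inl i) = cnt g (Sum.inr i) ∧
          cnt f (Sum.inr i) = cnt g (Sum.inl i)
      · rw [if_pos hC]
        have hval : ∀ j : Fin (m + 1), g j = Sum.inl i0 →
            psum (f ∘ Fin.succ) (g ∘ Equiv.swap 0 j ∘ Fin.succ) =
            (-1 : ℂ) ^ (∑ i, cnt (f ∘ Fin.succ) (Sum.inl i)) *
              (∏ i, ((cnt (f ∘ Fin.succ) (Sum.inl i)).factorial : ℂ)) *
              ∏ i, ((cnt (f ∘ Fin.succ) (Sum.inr i)).factorial : ℂ) := by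
          intro j hj
          rw [ih, if_pos ((hCC j hj).2 hC)]
        have hsum : ∀ j : Fin (m + 1),
            (if g j = Sum.inl i0 then
              psum (f ∘ Fin.succ) (g ∘ Equiv.swap 0 j ∘ Fin.succ) else 0) =
            if g j = Sum.inl i0 then
              ((-1 : ℂ) ^ (∑ i, cnt (f ∘ Fin.succ) (Sum.inl i)) *
                (∏ i, ((cnt (f ∘ Fin.succ) (Sum.inl i)).factorial : ℂ)) *
                ∏ i, ((cnt (f ∘ Fin.succ) (Sum.inr i)).factorial : ℂ)) else 0 := by
          intro j
          split
          · rename_i hj; rw [hval j hj]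
          · rfl
        rw [Finset.sum_congr rfl fun j _ => hsum j, sum_ite_eq_cnt]
        have hS : (∑ i, cnt f (Sum.inl i)) = (∑ i, cnt (f ∘ Fin.succ) (Sum.inl i)) :=
          Finset.sum_congr rfl fun i _ => hBfl i
        have hP2 : (∏ i, ((cnt f (Sum.inr i)).factorial : ℂ)) =
            (cnt f (Sum.inr i0) : ℂ) * ∏ i, ((cnt (f ∘ Fin.succ) (Sum.inr i)).factorial : ℂ) := by
          refine prod_factorial_succ _ _ i0 ?_ ?_
          · rw [hBfr i0]; simp [Nat.add_comm]
          · intro i hi; rw [hBfr i, if_neg (fun h => hi h.symm), Nat.zero_add]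
        have hP1 : (∏ i, ((cnt f (Sum.inl i)).factorial : ℂ)) =
            ∏ i, ((cnt (f ∘ Fin.succ) (Sum.inl i)).factorial : ℂ) :=
          Finset.prod_congr rfl fun i _ => by rw [hBfl i]
        have hcg : (cnt g (Sum.inl i0) : ℂ) = (cnt f (Sum.inr i0) : ℂ) := by
          rw [(hC i0).2]
        rw [hcg, hS, hP1, hP2]
        ring
      · rw [if_neg hC]
        refine Finset.sum_eq_zero fun j _ => ?_
        split
        · rename_i hj
          rw [ih, if_neg (fun h => hC ((hCC j hj).1 h))]
        · rfl

lemma cnt_get (l : List (WGen n)) (a : WGen n) :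
    cnt (fun i : Fin l.length => l.get i) a = l.count a := by
  induction l with
  | nil => simp [cnt]
  | cons b t ih =>
    have hstep : cnt (fun i : Fin (b :: t).length => (b :: t).get i) a =
        (if b = a then 1 else 0) + cnt (fun i : Fin t.length => t.get i) a := by
      rw [cnt, cnt]
      exact Fin.sum_univ_succ _
    rw [hstep, ih, List.count_cons]
    by_cases hb : b = a <;> simp [hb, Nat.add_comm]

lemma count_monoList_inl (α β : Fin n → ℕ) (i0 : Fin n) :
    (monoList α β).count (Sum.inl i0) = α i0 := by
  rw [monoList, List.count_append, List.count_flatMap, List.count_flatMap,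
    ← Fin.sum_univ_def, ← Fin.sum_univ_def]
  simp [Function.comp, List.count_replicate, beq_ll, beq_lr, beq_rl, beq_rr]

lemma count_monoList_inr (α β : Fin n → ℕ) (i0 : Fin n) :
    (monoList α β).count (Sum.inr i0) = β i0 := by
  rw [monoList, List.count_append, List.count_flatMap, List.count_flatMap,
    ← Fin.sum_univ_def, ← Fin.sum_univ_def]
  simp [Function.comp, List.count_replicate, beq_ll, beq_lr, beq_rl, beq_rr]

lemma length_monoList (α β : Fin n → ℕ) :
    (monoList α β).length = (∑ i, α i) + ∑ i, β i := by
  rw [monoList, List.length_append, List.length_flatMap, List.length_flatMap,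
    ← Fin.sum_univ_def, ← Fin.sum_univ_def]
  simp [Function.comp]

end KAux

open KAux

/-- `κ(x^α y^β, x^μ y^ν) = (-1)^{|α|} δ_{α,ν} δ_{β,μ} α! β!`; in particular the monomial
basis `{x^α y^β}` is an orthogonal basis of the Weyl algebra for the Kostant pairing. -/
theorem stmt0 {n : ℕ} (α β μ ν : Fin n → ℕ) :
    kostant (monoList α β) (monoList μ ν) =
      (-1) ^ (∑ i, α i) * (if α = ν then 1 else 0) * (if β = μ then 1 else 0) *
        (∏ i, (Nat.factorial (α i) : ℂ)) * (∏ i, (Nat.factorial (β i) : ℂ)) := by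
  by_cases h : (monoList α β).length = (monoList μ ν).length
  · have hk : kostant (monoList α β) (monoList μ ν) =
        psum (fun i => (monoList α β).get i)
          (fun i => (monoList μ ν).get (Fin.cast h i)) := by
      rw [kostant, dif_pos h]; rfl
    rw [hk, psum_eq]
    have hcg : ∀ a, cnt (fun i => (monoList μ ν).get (Fin.cast h i)) a =
        (monoList μ ν).count a := by
      intro a
      rw [show (fun i => (monoList μ ν).get (Fin.cast h i)) =
          (fun i => (monoList μ ν).get i) ∘ (finCongr h) from rfl,
        cnt_comp_equiv, cnt_get]
    simp only [cnt_get, hcg, count_monoList_inl, count_monoList_inr]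
    by_cases hc : α = ν ∧ β = μ
    · obtain ⟨h1, h2⟩ := hc
      subst h1; subst h2
      rw [if_pos (fun i => ⟨rfl, rfl⟩), if_pos rfl, if_pos rfl]
      ring
    · have hx : ¬ ∀ i, α i = ν i ∧ β i = μ i := fun hh =>
        hc ⟨funext fun i => (hh i).1, funext fun i => (hh i).2⟩
      rw [if_neg hx]
      rcases not_and_or.mp hc with h' | h' <;> simp [h']
  · rw [kostant, dif_neg h]
    have hne : ¬ (α = ν ∧ β = μ) := by
      rintro ⟨h1, h2⟩
      apply h
      rw [length_monoList, length_monoList, h1, h2, Nat.add_comm]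
    rcases not_and_or.mp hne with h' | h' <;> simp [h']
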